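/- Moments of the linear-Boltzmann invariant solution: let N ≥ 1, R ≥ 0, and let Ē : (−∞, 0] → ℝ^N be measurable with |Ē(r)| ≤ R for all r. Define M̄(v) = ∫_{−∞}^0 e^{σ} M( v − ∫_σ^0 Ē(r) dr ) dσ. Then M̄ is a well-defined nonnegative element of L¹(ℝ^N) with ∫_{ℝ^N} M̄(v) dv = 1 and first moment ∫_{ℝ^N} v M̄(v) dv = ∫_{−∞}^0 e^{σ} Ē(σ) dσ. -/

import Mathlib

open MeasureTheory

/-- The standard Gaussian (Maxwellian) density on `ℝ^N`. -/
noncomputable def gaussM (N : ℕ) (v : EuclideanSpace ℝ (Fin N)) : ℝ :=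
  (2 * Real.pi) ^ (-(N : ℝ) / 2) * Real.exp (-‖v‖ ^ 2 / 2)

section aux
variable {N : ℕ}

local notation "𝕍" => EuclideanSpace ℝ (Fin N)

lemma gaussM_nonneg (v : 𝕍) : 0 ≤ gaussM N v := by
  unfold gaussM; positivity

lemma gaussM_continuous : Continuous (gaussM N) := by
  unfold gaussM; fun_prop

lemma abs_coord_le (v : 𝕍) (i : Fin N) : |v i| ≤ ‖v‖ := by
  rw [EuclideanSpace.norm_eq, ← Real.sqrt_sq_eq_abs]
  apply Real.sqrt_le_sqrt
  have := Finset.single_le_sum (f := fun j => ‖v j‖ ^ 2) (fun j _ => by positivity)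
    (Finset.mem_univ i)
  simpa [Real.norm_eq_abs, sq_abs] using this

lemma integrable_exp_sqnorm {b : ℝ} (hb : 0 < b) :
    Integrable (fun v : 𝕍 => Real.exp (-b * ‖v‖ ^ 2)) := by
  have h := GaussianFourier.integrable_cexp_neg_mul_sq_norm_add (V := 𝕍) (b := (b:ℂ))
    (by simpa using hb) 0 0
  have h2 := h.re
  refine h2.congr (Filter.Eventually.of_forall fun v => ?_)
  simp only [zero_mul, add_zero, inner_zero_left, RCLike.re_to_complex, neg_mul]
  rw [show -((b:ℂ) * (‖v‖:ℂ)^2) = ((-(b * ‖v‖^2) : ℝ) : ℂ) by push_cast; ring,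
    Complex.exp_ofReal_re]

lemma integrable_gaussM : Integrable (gaussM N) := by
  refine ((integrable_exp_sqnorm (N := N) (by norm_num : (0:ℝ) < 1/2)).const_mul
    ((2 * Real.pi) ^ (-(N : ℝ) / 2))).congr (Filter.Eventually.of_forall fun v => ?_)
  unfold gaussM; ring_nf

lemma integral_gaussM : ∫ v : 𝕍, gaussM N v = 1 := by
  have h := GaussianFourier.integral_rexp_neg_mul_sq_norm (V := 𝕍) (b := (1:ℝ)/2) (by norm_num)
  calc ∫ v : 𝕍, gaussM N v
      = (2*Real.pi) ^ (-(N:ℝ)/2) * ∫ v : 𝕍, Real.exp (-(1/2) * ‖v‖^2) := by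
        rw [← integral_const_mul]; congr 1; funext v; unfold gaussM; ring_nf
    _ = 1 := by
        rw [h, finrank_euclideanSpace_fin, show Real.pi / (1/2) = 2*Real.pi by ring,
          ← Real.rpow_add (by positivity), show (-(N:ℝ)/2 + (N:ℝ)/2) = 0 by ring,
          Real.rpow_zero]

lemma exp_sq_key (x : ℝ) (hx : 0 ≤ x) :
    x * Real.exp (-x ^ 2 / 2) ≤ 2 * Real.exp (-(1/4) * x ^ 2) := by
  have h := Real.add_one_le_exp ((1/4) * x^2)
  have hp : (0:ℝ) < Real.exp ((1/4) * x^2) := Real.exp_pos _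
  have hx2 : x ≤ 2 * Real.exp ((1/4) * x^2) := by nlinarith [sq_nonneg (x - 2)]
  have hsplit : Real.exp (-x^2/2) = Real.exp (-(1/4)*x^2) * Real.exp (-(1/4)*x^2) := by
    rw [← Real.exp_add]; ring_nf
  rw [hsplit, ← mul_assoc]
  refine mul_le_mul_of_nonneg_right ?_ (Real.exp_pos _).le
  rw [show (-(1/4) * x^2 : ℝ) = -((1/4) * x^2) by ring, Real.exp_neg,
    ← div_eq_mul_inv, div_le_iff₀ hp]
  linarith

lemma continuous_coord (i : Fin N) : Continuous (fun v : 𝕍 => v i) :=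
  (EuclideanSpace.proj (𝕜 := ℝ) i).continuous

lemma integrable_coord_gaussM (i : Fin N) : Integrable (fun v : 𝕍 => v i * gaussM N v) := by
  have h0 : (0:ℝ) ≤ (2*Real.pi) ^ (-(N:ℝ)/2) := by positivity
  refine ((integrable_exp_sqnorm (N := N) (by norm_num : (0:ℝ) < 1/4)).const_mul
      ((2*Real.pi) ^ (-(N:ℝ)/2) * 2)).mono'
    ((continuous_coord i).mul gaussM_continuous).aestronglyMeasurable
    (Filter.Eventually.of_forall fun v => ?_)
  have h1 : ‖v i * gaussM N v‖ = |v i| * gaussM N v := by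
    rw [Real.norm_eq_abs, abs_mul, abs_of_nonneg (gaussM_nonneg v)]
  calc ‖v i * gaussM N v‖ = |v i| * gaussM N v := h1
    _ ≤ ‖v‖ * gaussM N v := mul_le_mul_of_nonneg_right (abs_coord_le v i) (gaussM_nonneg v)
    _ = (2*Real.pi) ^ (-(N:ℝ)/2) * (‖v‖ * Real.exp (-‖v‖^2/2)) := by unfold gaussM; ring
    _ ≤ (2*Real.pi) ^ (-(N:ℝ)/2) * (2 * Real.exp (-(1/4) * ‖v‖^2)) :=
        mul_le_mul_of_nonneg_left (exp_sq_key ‖v‖ (norm_nonneg v)) h0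
    _ = (2*Real.pi) ^ (-(N:ℝ)/2) * 2 * Real.exp (-(1/4) * ‖v‖^2) := by ring

lemma integral_coord_gaussM (i : Fin N) : ∫ v : 𝕍, v i * gaussM N v = 0 := by
  have h := integral_neg_eq_self (fun v : 𝕍 => v i * gaussM N v) volume
  have h2 : ∀ v : 𝕍, (-v) i * gaussM N (-v) = -(v i * gaussM N v) := by
    intro v
    have : (-v) i = -(v i) := rfl
    rw [this]; unfold gaussM; rw [norm_neg]; ring
  simp only [h2, integral_neg] at h
  linarith

lemma integrable_gaussM_shift (c : 𝕍) : Integrable (fun v : 𝕍 => gaussM N (v - c)) :=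
  integrable_gaussM.comp_sub_right c

lemma integral_gaussM_shift (c : 𝕍) : ∫ v : 𝕍, gaussM N (v - c) = 1 := by
  rw [integral_sub_right_eq_self (gaussM N) c]; exact integral_gaussM

lemma integrable_coordshift (i : Fin N) (c : 𝕍) :
    Integrable (fun w : 𝕍 => (w i + c i) * gaussM N w) := by
  refine ((integrable_coord_gaussM i).add (integrable_gaussM.const_mul (c i))).congr
    (Filter.Eventually.of_forall fun w => ?_)
  simp only [Pi.add_apply]; ring

lemma integrable_coord_gaussM_shift (i : Fin N) (c : 𝕍) :
    Integrable (fun v : 𝕍 => v i * gaussM N (v - c)) := by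
  refine ((integrable_coordshift i c).comp_sub_right c).congr
    (Filter.Eventually.of_forall fun v => ?_)
  show ((v - c) i + c i) * gaussM N (v - c) = v i * gaussM N (v - c)
  have h : (v - c) i = v i - c i := rfl
  rw [h]; ring_nf

lemma integral_coord_gaussM_shift (i : Fin N) (c : 𝕍) :
    ∫ v : 𝕍, v i * gaussM N (v - c) = c i := by
  rw [← integral_add_right_eq_self (fun v : 𝕍 => v i * gaussM N (v - c)) c]
  have h : ∀ v : 𝕍, (v + c) i * gaussM N (v + c - c) = v i * gaussM N v + c i * gaussM N v := by
    intro v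
    have h1 : (v + c) i = v i + c i := rfl
    rw [add_sub_cancel_right, h1]; ring
  simp only [h]
  rw [integral_add (integrable_coord_gaussM i) (integrable_gaussM.const_mul _),
    integral_coord_gaussM, integral_const_mul, integral_gaussM]
  ring

lemma integrable_abs_coord_gaussM (i : Fin N) :
    Integrable (fun w : 𝕍 => |w i| * gaussM N w) := by
  refine (integrable_coord_gaussM i).abs.congr (Filter.Eventually.of_forall fun w => ?_)
  show |w i * gaussM N w| = |w i| * gaussM N w
  rw [abs_mul, abs_of_nonneg (gaussM_nonneg w)]

lemma absmoment_gaussM_shift_le (i : Fin N) (c : 𝕍) :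
    ∫ v : 𝕍, ‖v i * gaussM N (v - c)‖ ≤ (∫ w : 𝕍, |w i| * gaussM N w) + ‖c‖ := by
  have h1 : ∫ v : 𝕍, ‖v i * gaussM N (v - c)‖ = ∫ w : 𝕍, |(w + c) i| * gaussM N w := by
    rw [← integral_add_right_eq_self (fun v : 𝕍 => ‖v i * gaussM N (v - c)‖) c]
    congr 1; funext w
    rw [add_sub_cancel_right, Real.norm_eq_abs, abs_mul, abs_of_nonneg (gaussM_nonneg w)]
  have hint2 : Integrable (fun w : 𝕍 => (|w i| + ‖c‖) * gaussM N w) := by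
    refine ((integrable_abs_coord_gaussM i).add (integrable_gaussM.const_mul ‖c‖)).congr
      (Filter.Eventually.of_forall fun w => ?_)
    simp only [Pi.add_apply]; ring
  have h2 : ∫ w : 𝕍, (|w i| + ‖c‖) * gaussM N w
      = (∫ w : 𝕍, |w i| * gaussM N w) + ‖c‖ := by
    simp only [add_mul]
    rw [integral_add (integrable_abs_coord_gaussM i) (integrable_gaussM.const_mul ‖c‖),
      integral_const_mul, integral_gaussM, mul_one]
  rw [h1]
  refine le_trans (integral_mono_of_nonneg ?_ hint2 ?_) (le_of_eq h2)
  · exact Filter.Eventually.of_forall fun w => mul_nonneg (abs_nonneg _) (gaussM_nonneg w)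
  · refine Filter.Eventually.of_forall fun w => ?_
    show |(w + c) i| * gaussM N w ≤ (|w i| + ‖c‖) * gaussM N w
    have h3 : (w + c) i = w i + c i := rfl
    rw [h3]
    refine mul_le_mul_of_nonneg_right ?_ (gaussM_nonneg w)
    exact le_trans (abs_add_le _ _) (by linarith [abs_coord_le c i])

end aux

lemma integrableOn_neg_mul_exp : IntegrableOn (fun σ : ℝ => -σ * Real.exp σ) (Set.Iic 0) := by
  have hcont : Continuous fun σ : ℝ => -σ * Real.exp σ := by fun_prop
  refine integrableOn_Iic_of_intervalIntegral_norm_bounded (l := Filter.atBot) (a := id) 1 0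
    (fun y => (hcont.intervalIntegrable y 0).1) Filter.tendsto_id ?_
  refine Filter.eventually_of_mem (Filter.Iic_mem_atBot 0) fun y hy => ?_
  have hy' : y ≤ 0 := hy
  simp only [id_eq]
  have hderiv : ∀ x ∈ Set.uIcc y 0,
      HasDerivAt (fun x : ℝ => (1 - x) * Real.exp x) (-x * Real.exp x) x := by
    intro x _
    have h := ((hasDerivAt_const x (1:ℝ)).sub (hasDerivAt_id x)).mul (Real.hasDerivAt_exp x)
    have h2 : HasDerivAt (fun x : ℝ => (1 - x) * Real.exp x)
        ((0 - 1) * Real.exp x + (1 - x) * Real.exp x) x := h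
    convert h2 using 1
    ring
  have hint : IntervalIntegrable (fun x : ℝ => -x * Real.exp x) volume y 0 :=
    hcont.intervalIntegrable y 0
  have hval : ∫ x in y..0, -x * Real.exp x
      = (1 - 0) * Real.exp 0 - (1 - y) * Real.exp y :=
    intervalIntegral.integral_eq_sub_of_hasDerivAt hderiv hint
  have hnorm : ∫ x in y..0, ‖-x * Real.exp x‖ = ∫ x in y..0, -x * Real.exp x := by
    apply intervalIntegral.integral_congr
    intro x hx
    rw [Set.uIcc_of_le hy] at hx
    exact Real.norm_of_nonneg (mul_nonneg (neg_nonneg.2 hx.2) (Real.exp_pos x).le)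
  have hpos : 0 ≤ (1 - y) * Real.exp y := mul_nonneg (by linarith) (Real.exp_pos y).le
  rw [hnorm, hval, Real.exp_zero]
  linarith

lemma exp_primitive_swap (f : ℝ → ℝ) (hf : Measurable f) (R : ℝ)
    (hb : ∀ r, |f r| ≤ R) :
    ∫ σ in Set.Iic (0:ℝ), Real.exp σ * (∫ r in σ..(0:ℝ), f r)
      = ∫ r in Set.Iic (0:ℝ), Real.exp r * f r := by
  have hR : 0 ≤ R := le_trans (abs_nonneg _) (hb 0)
  set μ := volume.restrict (Set.Iic (0:ℝ)) with hμ
  set Φ : ℝ × ℝ → ℝ :=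
    fun p => if p.1 < p.2 ∧ p.2 ≤ 0 then Real.exp p.1 * f p.2 else 0 with hΦ
  have hΦm : Measurable Φ := by
    apply Measurable.ite
    · exact (measurableSet_lt measurable_fst measurable_snd).inter
        (measurable_snd measurableSet_Iic)
    · exact (Real.measurable_exp.comp measurable_fst).mul (hf.comp measurable_snd)
    · exact measurable_const
  have hΦσ : ∀ σ : ℝ, (fun r => Φ (σ, r))
      = (Set.Ioc σ 0).indicator (fun r => Real.exp σ * f r) := by
    intro σ; funext r
    simp only [hΦ, Set.indicator_apply, Set.mem_Ioc]
  have hΦint : Integrable Φ (μ.prod volume) := by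
    refine (integrable_prod_iff hΦm.aestronglyMeasurable).2 ⟨?_, ?_⟩
    · refine Filter.Eventually.of_forall fun σ => ?_
      rw [hΦσ σ]
      refine (Measure.integrableOn_of_bounded (M := Real.exp σ * R) measure_Ioc_lt_top.ne
        ((hf.const_mul (Real.exp σ)).aestronglyMeasurable) ?_).integrable_indicator
        measurableSet_Ioc
      refine Filter.Eventually.of_forall fun r => ?_
      rw [Real.norm_eq_abs, abs_mul, Real.abs_exp]
      exact mul_le_mul_of_nonneg_left (hb r) (Real.exp_pos σ).le
    · refine Integrable.mono' ((integrableOn_neg_mul_exp.const_mul R).congr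
        (Filter.Eventually.of_forall fun σ => ?_) :
          Integrable (fun σ : ℝ => Real.exp σ * (R * (-σ))) μ)
        (hΦm.norm.aestronglyMeasurable.integral_prod_right') ?_
      · ring
      · rw [hμ]
        filter_upwards [self_mem_ae_restrict measurableSet_Iic] with σ hσ
        have hσ' : σ ≤ 0 := hσ
        have hnn : 0 ≤ ∫ r, ‖Φ (σ, r)‖ := integral_nonneg fun _ => norm_nonneg _
        rw [Real.norm_of_nonneg hnn]
        have hble : ∀ r : ℝ, ‖Φ (σ, r)‖
            ≤ (Set.Ioc σ 0).indicator (fun _ => Real.exp σ * R) r := by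
          intro r
          rw [congrFun (hΦσ σ) r]
          by_cases hr : r ∈ Set.Ioc σ 0
          · rw [Set.indicator_of_mem hr, Set.indicator_of_mem hr, Real.norm_eq_abs,
              abs_mul, Real.abs_exp]
            exact mul_le_mul_of_nonneg_left (hb r) (Real.exp_pos σ).le
          · rw [Set.indicator_of_notMem hr, Set.indicator_of_notMem hr, norm_zero]
        have hind : Integrable ((Set.Ioc σ 0).indicator
            (fun _ : ℝ => Real.exp σ * R)) volume :=
          (integrable_indicator_iff measurableSet_Ioc).2
            (integrableOn_const measure_Ioc_lt_top.ne)
        calc ∫ r, ‖Φ (σ, r)‖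
            ≤ ∫ r, (Set.Ioc σ 0).indicator (fun _ => Real.exp σ * R) r :=
              integral_mono_of_nonneg (Filter.Eventually.of_forall fun r => norm_nonneg _)
                hind (Filter.Eventually.of_forall hble)
          _ = (volume (Set.Ioc σ 0)).toReal • (Real.exp σ * R) :=
              integral_indicator_const _ measurableSet_Ioc
          _ ≤ Real.exp σ * (R * -σ) := by
              rw [Real.volume_Ioc, smul_eq_mul, ENNReal.toReal_ofReal (by linarith)]
              nlinarith [Real.exp_pos σ]
  have hswap := integral_integral_swap (f := fun σ r => Φ (σ, r)) (μ := μ) (ν := volume)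
    (by exact hΦint)
  have hL : ∫ σ in Set.Iic (0:ℝ), Real.exp σ * (∫ r in σ..(0:ℝ), f r)
      = ∫ σ, (∫ r, Φ (σ, r)) ∂μ := by
    rw [hμ]
    refine (setIntegral_congr_fun measurableSet_Iic fun σ hσ => ?_)
    rw [hΦσ σ, integral_indicator measurableSet_Ioc,
      intervalIntegral.integral_of_le (hσ : σ ≤ 0), ← integral_const_mul]
  have hR2 : ∀ r : ℝ, (∫ σ, Φ (σ, r) ∂μ)
      = (Set.Iic (0:ℝ)).indicator (fun r => Real.exp r * f r) r := by
    intro r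
    by_cases hr : r ≤ 0
    · have h1 : ∀ σ : ℝ, Φ (σ, r) = (Set.Iio r).indicator (fun σ => Real.exp σ * f r) σ := by
        intro σ
        simp only [hΦ, Set.indicator_apply, Set.mem_Iio, hr, and_true]
      simp only [h1]
      rw [hμ, integral_indicator measurableSet_Iio, Measure.restrict_restrict measurableSet_Iio,
        (Set.inter_eq_left.mpr (fun x hx => le_trans (le_of_lt hx) hr) :
          Set.Iio r ∩ Set.Iic 0 = Set.Iio r),
        integral_mul_const, setIntegral_congr_set MeasureTheory.Iio_ae_eq_Iic, integral_exp_Iic,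
        Set.indicator_of_mem (Set.mem_Iic.2 hr)]
    · have h0 : ∀ σ : ℝ, Φ (σ, r) = 0 := by
        intro σ
        simp only [hΦ]
        exact if_neg fun h => hr h.2
      simp only [h0, integral_zero]
      rw [Set.indicator_of_notMem (by simpa using hr)]
  rw [hL, hswap]
  simp only [hR2]
  exact integral_indicator measurableSet_Iic

/-- Moments of the linear-Boltzmann invariant solution
`M̄(v) = ∫_{-∞}^0 e^σ M(v - ∫_σ^0 Ē(r) dr) dσ`: it is a nonnegative probability density
with first moment `∫ v M̄(v) dv = ∫_{-∞}^0 e^σ Ē(σ) dσ`. -/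
theorem LB_invariant_moments (N : ℕ) (hN : 1 ≤ N) (R : ℝ) (hR : 0 ≤ R)
    (Ebar : ℝ → EuclideanSpace ℝ (Fin N)) (hEm : Measurable Ebar)
    (hEb : ∀ r, r ≤ 0 → ‖Ebar r‖ ≤ R)
    (Mbar : EuclideanSpace ℝ (Fin N) → ℝ)
    (hMbar : ∀ v, Mbar v
      = ∫ σ in Set.Iic (0:ℝ), Real.exp σ * gaussM N (v - ∫ r in σ..(0:ℝ), Ebar r)) :
    (∀ v, 0 ≤ Mbar v) ∧
    Integrable Mbar ∧
    ((∫ v : EuclideanSpace ℝ (Fin N), Mbar v) = 1) ∧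
    (∀ i : Fin N, (∫ v : EuclideanSpace ℝ (Fin N), v i * Mbar v)
      = ∫ σ in Set.Iic (0:ℝ), Real.exp σ * Ebar σ i) := by
  classical
  set E' : ℝ → EuclideanSpace ℝ (Fin N) := (Set.Iic (0:ℝ)).indicator Ebar with hE'
  have hE'm : Measurable E' := hEm.indicator measurableSet_Iic
  have hE'b : ∀ r, ‖E' r‖ ≤ R := by
    intro r
    by_cases h : r ≤ 0
    · rw [hE', Set.indicator_of_mem (Set.mem_Iic.2 h)]; exact hEb r h
    · rw [hE', Set.indicator_of_notMem (by simpa using h)]; simpa using hR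
  have intE' : ∀ a b : ℝ, IntervalIntegrable E' volume a b := by
    intro a b
    rw [intervalIntegrable_iff]
    exact Measure.integrableOn_of_bounded (M := R) measure_Ioc_lt_top.ne
      hE'm.aestronglyMeasurable (Filter.Eventually.of_forall hE'b)
  set c : ℝ → EuclideanSpace ℝ (Fin N) := fun σ => ∫ r in σ..(0:ℝ), E' r with hc
  have hc_cont : Continuous c := by
    have h1 : Continuous fun σ => -∫ r in (0:ℝ)..σ, E' r :=
      (intervalIntegral.continuous_primitive intE' 0).neg
    refine h1.congr fun σ => ?_
    show -∫ r in (0:ℝ)..σ, E' r = ∫ r in σ..(0:ℝ), E' r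
    exact (intervalIntegral.integral_symm 0 σ).symm
  have hc_bound : ∀ σ ∈ Set.Iic (0:ℝ), ‖c σ‖ ≤ R * (-σ) := by
    intro σ hσ
    have := intervalIntegral.norm_integral_le_of_norm_le_const
      (C := R) (a := σ) (b := (0:ℝ)) (f := E') (fun x _ => hE'b x)
    have hσ' : σ ≤ 0 := hσ
    rw [hc]
    refine le_trans this (le_of_eq ?_)
    rw [abs_of_nonneg (by linarith : (0:ℝ) ≤ 0 - σ)]
    ring
  have hc_eq : ∀ σ ∈ Set.Iic (0:ℝ), (∫ r in σ..(0:ℝ), Ebar r) = c σ := by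
    intro σ hσ
    refine intervalIntegral.integral_congr fun r hr => ?_
    rw [Set.uIcc_of_le (hσ : σ ≤ 0)] at hr
    rw [hE', Set.indicator_of_mem (Set.mem_Iic.2 hr.2)]
  have hMbar' : ∀ v, Mbar v
      = ∫ σ in Set.Iic (0:ℝ), Real.exp σ * gaussM N (v - c σ) := by
    intro v
    rw [hMbar v]
    exact setIntegral_congr_fun measurableSet_Iic fun σ hσ => by rw [hc_eq σ hσ]
  have hFcont : Continuous
      (fun p : ℝ × EuclideanSpace ℝ (Fin N) => Real.exp p.1 * gaussM N (p.2 - c p.1)) :=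
    (Real.continuous_exp.comp continuous_fst).mul
      (gaussM_continuous.comp (continuous_snd.sub (hc_cont.comp continuous_fst)))
  have hFint : Integrable
      (fun p : ℝ × EuclideanSpace ℝ (Fin N) => Real.exp p.1 * gaussM N (p.2 - c p.1))
      ((volume.restrict (Set.Iic (0:ℝ))).prod volume) := by
    refine (integrable_prod_iff hFcont.aestronglyMeasurable).2
      ⟨Filter.Eventually.of_forall fun σ => ?_, ?_⟩
    · show Integrable
          (fun v : EuclideanSpace ℝ (Fin N) => Real.exp σ * gaussM N (v - c σ)) volume
      exact (integrable_gaussM_shift (c σ)).const_mul _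
    · show Integrable (fun σ : ℝ => ∫ v : EuclideanSpace ℝ (Fin N),
          ‖Real.exp σ * gaussM N (v - c σ)‖) (volume.restrict (Set.Iic (0:ℝ)))
      refine ((integrableOn_exp_Iic 0) : Integrable _ _).congr
        (Filter.Eventually.of_forall fun σ => ?_)
      have : ∀ v : EuclideanSpace ℝ (Fin N),
          ‖Real.exp σ * gaussM N (v - c σ)‖ = Real.exp σ * gaussM N (v - c σ) := fun v =>
        Real.norm_of_nonneg (mul_nonneg (Real.exp_pos σ).le (gaussM_nonneg _))
      simp only [this]
      rw [integral_const_mul, integral_gaussM_shift, mul_one]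
  have hpos : ∀ v, 0 ≤ Mbar v := by
    intro v
    rw [hMbar v]
    exact setIntegral_nonneg measurableSet_Iic fun σ _ =>
      mul_nonneg (Real.exp_pos σ).le (gaussM_nonneg _)
  have hMint : Integrable Mbar := by
    have h := hFint.integral_prod_right
    exact h.congr (Filter.Eventually.of_forall fun v => (hMbar' v).symm)
  have hmass : (∫ v : EuclideanSpace ℝ (Fin N), Mbar v) = 1 := by
    have hswap := integral_integral_swap
      (f := fun σ (v : EuclideanSpace ℝ (Fin N)) => Real.exp σ * gaussM N (v - c σ))
      (μ := volume.restrict (Set.Iic (0:ℝ))) (ν := volume) (by exact hFint)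
    calc ∫ v : EuclideanSpace ℝ (Fin N), Mbar v
        = ∫ v : EuclideanSpace ℝ (Fin N),
            ∫ σ in Set.Iic (0:ℝ), Real.exp σ * gaussM N (v - c σ) :=
          integral_congr_ae (Filter.Eventually.of_forall hMbar')
      _ = ∫ σ in Set.Iic (0:ℝ), ∫ v : EuclideanSpace ℝ (Fin N),
            Real.exp σ * gaussM N (v - c σ) := hswap.symm
      _ = ∫ σ in Set.Iic (0:ℝ), Real.exp σ := by
          refine setIntegral_congr_fun measurableSet_Iic fun σ _ => ?_
          rw [integral_const_mul, integral_gaussM_shift, mul_one]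
      _ = 1 := integral_exp_Iic_zero
  refine ⟨hpos, hMint, hmass, fun i => ?_⟩
  set K : ℝ := ∫ w : EuclideanSpace ℝ (Fin N), |w i| * gaussM N w with hK
  have hGcont : Continuous (fun p : ℝ × EuclideanSpace ℝ (Fin N) =>
      p.2 i * (Real.exp p.1 * gaussM N (p.2 - c p.1))) :=
    ((continuous_coord i).comp continuous_snd).mul hFcont
  have hGint : Integrable
      (fun p : ℝ × EuclideanSpace ℝ (Fin N) => p.2 i * (Real.exp p.1 * gaussM N (p.2 - c p.1)))
      ((volume.restrict (Set.Iic (0:ℝ))).prod volume) := by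
    refine (integrable_prod_iff hGcont.aestronglyMeasurable).2
      ⟨Filter.Eventually.of_forall fun σ => ?_, ?_⟩
    · show Integrable (fun v : EuclideanSpace ℝ (Fin N) =>
          v i * (Real.exp σ * gaussM N (v - c σ))) volume
      exact ((integrable_coord_gaussM_shift i (c σ)).const_mul (Real.exp σ)).congr
        (Filter.Eventually.of_forall fun v => by simp only []; ring)
    · show Integrable (fun σ : ℝ => ∫ v : EuclideanSpace ℝ (Fin N),
          ‖v i * (Real.exp σ * gaussM N (v - c σ))‖) (volume.restrict (Set.Iic (0:ℝ)))
      have hdom : Integrable (fun σ : ℝ => Real.exp σ * (K + R * (-σ)))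
          (volume.restrict (Set.Iic (0:ℝ))) := by
        have h1 : Integrable (fun σ : ℝ => K * Real.exp σ) (volume.restrict (Set.Iic (0:ℝ))) :=
          (integrableOn_exp_Iic 0).const_mul K
        have h2 : Integrable (fun σ : ℝ => R * (-σ * Real.exp σ))
            (volume.restrict (Set.Iic (0:ℝ))) := integrableOn_neg_mul_exp.const_mul R
        exact (h1.add h2).congr (Filter.Eventually.of_forall fun σ => by
          simp only [Pi.add_apply]; ring)
      refine Integrable.mono' hdom
        (hGcont.norm.aestronglyMeasurable.integral_prod_right') ?_
      filter_upwards [self_mem_ae_restrict measurableSet_Iic] with σ hσ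
      have hnn : 0 ≤ ∫ v : EuclideanSpace ℝ (Fin N),
          ‖v i * (Real.exp σ * gaussM N (v - c σ))‖ := integral_nonneg fun _ => norm_nonneg _
      rw [Real.norm_of_nonneg hnn]
      have heq : ∫ v : EuclideanSpace ℝ (Fin N), ‖v i * (Real.exp σ * gaussM N (v - c σ))‖
          = Real.exp σ * ∫ v : EuclideanSpace ℝ (Fin N), ‖v i * gaussM N (v - c σ)‖ := by
        rw [← integral_const_mul]
        refine integral_congr_ae (Filter.Eventually.of_forall fun v => ?_)
        show ‖v i * (Real.exp σ * gaussM N (v - c σ))‖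
            = Real.exp σ * ‖v i * gaussM N (v - c σ)‖
        rw [Real.norm_eq_abs, Real.norm_eq_abs, abs_mul, abs_mul, abs_mul, Real.abs_exp]
        ring
      rw [heq]
      have hb1 := absmoment_gaussM_shift_le i (c σ)
      have hb2 := hc_bound σ hσ
      have : (∫ v : EuclideanSpace ℝ (Fin N), ‖v i * gaussM N (v - c σ)‖) ≤ K + R * (-σ) := by
        rw [hK]; exact le_trans hb1 (by linarith)
      exact mul_le_mul_of_nonneg_left this (Real.exp_pos σ).le
  have hswap := integral_integral_swap
    (f := fun σ (v : EuclideanSpace ℝ (Fin N)) => v i * (Real.exp σ * gaussM N (v - c σ)))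
    (μ := volume.restrict (Set.Iic (0:ℝ))) (ν := volume) (by exact hGint)
  have h1 : ∫ v : EuclideanSpace ℝ (Fin N), v i * Mbar v
      = ∫ v : EuclideanSpace ℝ (Fin N),
          ∫ σ in Set.Iic (0:ℝ), v i * (Real.exp σ * gaussM N (v - c σ)) := by
    refine integral_congr_ae (Filter.Eventually.of_forall fun v => ?_)
    show v i * Mbar v = ∫ σ in Set.Iic (0:ℝ), v i * (Real.exp σ * gaussM N (v - c σ))
    rw [hMbar' v, integral_const_mul]
  have h3 : ∫ σ in Set.Iic (0:ℝ), ∫ v : EuclideanSpace ℝ (Fin N),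
        v i * (Real.exp σ * gaussM N (v - c σ))
      = ∫ σ in Set.Iic (0:ℝ), Real.exp σ * (∫ r in σ..(0:ℝ), E' r i) := by
    refine setIntegral_congr_fun measurableSet_Iic fun σ _ => ?_
    have hre : ∀ v : EuclideanSpace ℝ (Fin N),
        v i * (Real.exp σ * gaussM N (v - c σ))
          = Real.exp σ * (v i * gaussM N (v - c σ)) := fun v => by ring
    simp only [hre]
    rw [integral_const_mul, integral_coord_gaussM_shift]
    congr 1
    have hproj := (EuclideanSpace.proj (𝕜 := ℝ) i).intervalIntegral_comp_comm (intE' σ 0)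
    simpa using hproj.symm
  have hfm : Measurable fun r => E' r i :=
    ((EuclideanSpace.proj (𝕜 := ℝ) i).continuous.measurable).comp hE'm
  have hfb : ∀ r, |E' r i| ≤ R := fun r => le_trans (abs_coord_le (E' r) i) (hE'b r)
  rw [h1, ← hswap, h3, exp_primitive_swap (fun r => E' r i) hfm R hfb]
  refine setIntegral_congr_fun measurableSet_Iic fun r hr => ?_
  rw [hE', Set.indicator_of_mem (Set.mem_Iic.2 (hr : r ≤ 0))]
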